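/- Let GC(G,S,α) be a generalized Cayley graph over a finite group G. If GC(G,S,α) is connected, then the set Θ of elements reachable from the identity e by a walk of even length equals the subgroup ⟨S⁻¹S⟩, and |⟨S⁻¹S⟩| ≥ |G|/2. -/

import Mathlib

theorem stmt_10 {G : Type*} [Group G] [Finite G] (α : G ≃* G)
    (hinv : ∀ g : G, α (α g) = g) (S : Set G)
    (hS1 : S ∩ {x : G | ∃ g : G, x = α g⁻¹ * g} = ∅)
    (hS2 : (fun s => α s⁻¹) '' S = S)
    (Γ : SimpleGraph G) (hΓ : ∀ x y : G, Γ.Adj x y ↔ α x⁻¹ * y ∈ S)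
    (hconn : Γ.Connected) :
    {x : G | ∃ w : Γ.Walk 1 x, Even w.length} =
        ↑(Subgroup.closure {u : G | ∃ s ∈ S, ∃ t ∈ S, u = s⁻¹ * t}) ∧
      Nat.card G ≤ 2 * Nat.card (Subgroup.closure {u : G | ∃ s ∈ S, ∃ t ∈ S, u = s⁻¹ * t}) := by
  set T : Set G := {u : G | ∃ s ∈ S, ∃ t ∈ S, u = s⁻¹ * t} with hT
  set Θ : Set G := {x : G | ∃ w : Γ.Walk 1 x, Even w.length} with hΘ
  have hαS : ∀ s ∈ S, α s⁻¹ ∈ S := by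
    intro s hs; rw [← hS2]; exact ⟨s, hs, rfl⟩
  -- two-step extension of even walks
  have step2 : ∀ x ∈ Θ, ∀ s ∈ S, ∀ t ∈ S, x * (s⁻¹ * t) ∈ Θ := by
    intro x hx s hs t ht
    obtain ⟨w, hw⟩ := hx
    have h1 : Γ.Adj x (α x * α s⁻¹) := by
      rw [hΓ]
      have h : α x⁻¹ * (α x * α s⁻¹) = α s⁻¹ := by rw [map_inv α x]; group
      rw [h]; exact hαS s hs
    have h2 : Γ.Adj (α x * α s⁻¹) (x * (s⁻¹ * t)) := by
      rw [hΓ]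
      have h : α (α x * α s⁻¹)⁻¹ * (x * (s⁻¹ * t)) = t := by
        rw [map_inv α (α x * α s⁻¹), map_mul, hinv x, hinv s⁻¹]; group
      rw [h]; exact ht
    refine ⟨(w.concat h1).concat h2, ?_⟩
    rw [SimpleGraph.Walk.length_concat, SimpleGraph.Walk.length_concat]
    obtain ⟨k, hk⟩ := hw
    exact ⟨k + 1, by omega⟩
  -- even walks land in the submonoid closure of T
  have evenWalk : ∀ n : ℕ, ∀ y x : G, ∀ w : Γ.Walk y x, w.length = 2 * n →
      y⁻¹ * x ∈ Submonoid.closure T := by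
    intro n
    induction n with
    | zero =>
      intro y x w hw
      have h0 := SimpleGraph.Walk.eq_of_length_eq_zero (by omega : w.length = 0)
      subst h0
      simpa using Submonoid.one_mem (Submonoid.closure T)
    | succ n ih =>
      intro y x w hw
      cases w with
      | nil => simp at hw
      | @cons _ z _ h w' =>
        cases w' with
        | nil => simp at hw; omega
        | @cons _ z' _ h' w'' =>
          simp only [SimpleGraph.Walk.length_cons] at hw
          have hrest : z'⁻¹ * x ∈ Submonoid.closure T := ih z' x w'' (by omega)
          have hu : α y⁻¹ * z ∈ S := (hΓ y z).1 h
          have hv : α z⁻¹ * z' ∈ S := (hΓ z z').1 h'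
          have hfirst : y⁻¹ * z' ∈ T := by
            refine ⟨α (α y⁻¹ * z)⁻¹, hαS _ hu, α z⁻¹ * z', hv, ?_⟩
            rw [map_inv α (α y⁻¹ * z), map_mul, hinv, map_inv α z]
            group
          have hsplit : y⁻¹ * x = (y⁻¹ * z') * (z'⁻¹ * x) := by group
          rw [hsplit]
          exact Submonoid.mul_mem _ (Submonoid.subset_closure hfirst) hrest
  -- multiplication by monoid-closure elements preserves Θ
  have hMΘ : ∀ b ∈ Submonoid.closure T, ∀ x ∈ Θ, x * b ∈ Θ := by
    intro b hb
    refine Submonoid.closure_induction (motive := fun b _ => ∀ x ∈ Θ, x * b ∈ Θ) ?_ ?_ ?_ hb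
    · rintro u ⟨s, hs, t, ht, rfl⟩ x hx; exact step2 x hx s hs t ht
    · intro x hx; simpa using hx
    · intro a b _ _ ha hb x hx; rw [← mul_assoc]; exact hb _ (ha x hx)
  -- subgroup closure = submonoid closure (T is symmetric)
  have hsym : T ∪ T⁻¹ = T := by
    ext u
    constructor
    · rintro (h | h)
      · exact h
      · obtain ⟨s, hs, t, ht, hu⟩ := h
        refine ⟨t, ht, s, hs, ?_⟩
        have : u⁻¹ = s⁻¹ * t := hu
        calc u = (u⁻¹)⁻¹ := by group
          _ = (s⁻¹ * t)⁻¹ := by rw [this]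
          _ = t⁻¹ * s := by group
    · exact Or.inl
  have hsetEq : (↑(Subgroup.closure T) : Set G) = ↑(Submonoid.closure T) := by
    have h := Subgroup.closure_toSubmonoid T
    rw [hsym] at h
    calc (↑(Subgroup.closure T) : Set G) = ↑((Subgroup.closure T).toSubmonoid) := rfl
      _ = ↑(Submonoid.closure T) := by rw [h]
  have hΘeq : Θ = ↑(Subgroup.closure T) := by
    rw [hsetEq]
    apply subset_antisymm
    · rintro x ⟨w, k, hk⟩
      have := evenWalk k 1 x w (by omega)
      simpa using this
    · intro x hx
      have h1 : (1 : G) ∈ Θ := ⟨SimpleGraph.Walk.nil, by simp⟩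
      have := hMΘ x hx 1 h1
      simpa using this
  refine ⟨hΘeq, ?_⟩
  -- cardinality bound
  set O : Set G := {x : G | ∃ w : Γ.Walk 1 x, Odd w.length} with hOdef
  have hcov : ∀ x : G, x ∈ Θ ∪ O := by
    intro x
    obtain ⟨w⟩ := hconn.preconnected 1 x
    rcases Nat.even_or_odd w.length with h | h
    · exact Or.inl ⟨w, h⟩
    · exact Or.inr ⟨w, h⟩
  have hO : O.ncard ≤ Θ.ncard := by
    rcases O.eq_empty_or_nonempty with h | ⟨x₀, hx₀⟩
    · simp [h]
    · obtain ⟨w₀, hw₀⟩ := hx₀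
      have hSne : ∃ s, s ∈ S := by
        cases w₀ with
        | nil => simp [Nat.odd_iff] at hw₀
        | @cons _ z _ h w' => exact ⟨α 1⁻¹ * z, (hΓ 1 z).1 h⟩
      obtain ⟨s₀, hs₀⟩ := hSne
      refine Set.ncard_le_ncard_of_injOn (fun x => α x * s₀) ?_ ?_ (Set.toFinite _)
      · rintro x ⟨w, hw⟩
        have hadj : Γ.Adj x (α x * s₀) := by
          rw [hΓ]
          have h : α x⁻¹ * (α x * s₀) = s₀ := by rw [map_inv α x]; group
          rw [h]; exact hs₀
        refine ⟨w.concat hadj, ?_⟩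
        rw [SimpleGraph.Walk.length_concat]
        obtain ⟨k, hk⟩ := hw
        exact ⟨k + 1, by omega⟩
      · intro a _ b _ hab
        have := mul_right_cancel hab
        exact α.injective this
  have hcardH : Nat.card ↥(Subgroup.closure T) = Θ.ncard := by
    rw [hΘeq, ← SetLike.coe_sort_coe, Nat.card_coe_set_eq]
  have huniv : Θ ∪ O = Set.univ := Set.eq_univ_of_forall hcov
  have hle : Nat.card G ≤ Θ.ncard + O.ncard := by
    calc Nat.card G = (Set.univ : Set G).ncard := (Set.ncard_univ G).symm
      _ = (Θ ∪ O).ncard := by rw [huniv]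
      _ ≤ Θ.ncard + O.ncard := Set.ncard_union_le _ _
  rw [hcardH]
  omega
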